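/- arXiv:2604.04919 — 10 statements merged into one kernel-verified Lean document; each statement's English description precedes it below -/
import Mathlib

section
/- Let a11 be invertible and σ = a22 - a21 * a11⁻¹ * a12 its Schur complement. Then the map sending x : ext → ℝ to the vector (-(a11⁻¹ * a12).mulVec x, x) : (int ⊕ ext) → ℝ restricts to a linear equivalence from the kernel of σ.mulVecLin onto the kernel of S.mulVecLin. In particular, ker S ≅ ker σ as real vector spaces. -/
open Matrix

theorem schur_kernel_equiv
    {int ext : Type*} [Fintype int] [Fintype ext] [DecidableEq int] [DecidableEq ext]
    (a11 : Matrix int int ℝ) (a12 : Matrix int ext ℝ)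
    (a21 : Matrix ext int ℝ) (a22 : Matrix ext ext ℝ)
    (h : IsUnit a11.det) :
    ∃ e : LinearMap.ker (a22 - a21 * a11⁻¹ * a12).mulVecLin ≃ₗ[ℝ]
        LinearMap.ker (Matrix.fromBlocks a11 a12 a21 a22).mulVecLin,
      ∀ x : LinearMap.ker (a22 - a21 * a11⁻¹ * a12).mulVecLin,
        (e x : (int ⊕ ext) → ℝ) =
          Sum.elim (-((a11⁻¹ * a12).mulVec (x : ext → ℝ))) (x : ext → ℝ) := by
  have ha : a11 * a11⁻¹ = 1 := Matrix.mul_nonsing_inv a11 h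
  have ha' : a11⁻¹ * a11 = 1 := Matrix.nonsing_inv_mul a11 h
  have mem_f : ∀ x : ext → ℝ, (a22 - a21 * a11⁻¹ * a12).mulVec x = 0 →
      (fromBlocks a11 a12 a21 a22).mulVec
        (Sum.elim (-((a11⁻¹ * a12).mulVec x)) x) = 0 := by
    intro x hx
    rw [fromBlocks_mulVec]
    have h1 : a11 *ᵥ (-((a11⁻¹ * a12) *ᵥ x)) + a12 *ᵥ x = 0 := by
      rw [mulVec_neg, mulVec_mulVec, ← Matrix.mul_assoc, ha, Matrix.one_mul,
        neg_add_cancel]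
    have h2 : a21 *ᵥ (-((a11⁻¹ * a12) *ᵥ x)) + a22 *ᵥ x = 0 := by
      rw [mulVec_neg, mulVec_mulVec, ← Matrix.mul_assoc]
      rw [sub_mulVec] at hx
      rw [neg_add_eq_zero]
      linear_combination (norm := module) -hx
    simp only [Function.comp_def, Sum.elim_inl, Sum.elim_inr] at *
    rw [h1, h2]
    ext i; cases i <;> rfl
  have mem_g : ∀ y : (int ⊕ ext) → ℝ,
      (fromBlocks a11 a12 a21 a22).mulVec y = 0 →
      (y ∘ Sum.inl = -((a11⁻¹ * a12) *ᵥ (y ∘ Sum.inr)) ∧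
       (a22 - a21 * a11⁻¹ * a12).mulVec (y ∘ Sum.inr) = 0) := by
    intro y hy
    rw [fromBlocks_mulVec] at hy
    have h1 : a11 *ᵥ (y ∘ Sum.inl) + a12 *ᵥ (y ∘ Sum.inr) = 0 := by
      have := congrFun hy; funext i; simpa using congrFun hy (Sum.inl i)
    have h2 : a21 *ᵥ (y ∘ Sum.inl) + a22 *ᵥ (y ∘ Sum.inr) = 0 := by
      funext i; simpa using congrFun hy (Sum.inr i)
    have e1 : y ∘ Sum.inl = -((a11⁻¹ * a12) *ᵥ (y ∘ Sum.inr)) := by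
      have := congrArg (fun v => a11⁻¹ *ᵥ v) h1
      simp only [mulVec_add, mulVec_mulVec, ha', one_mulVec, mulVec_zero] at this
      rw [eq_neg_iff_add_eq_zero]
      simpa [Matrix.mul_assoc] using this
    refine ⟨e1, ?_⟩
    rw [sub_mulVec, Matrix.mul_assoc, ← mulVec_mulVec]
    rw [e1, mulVec_neg] at h2
    linear_combination (norm := module) h2
  refine ⟨{ toFun := fun x => ⟨Sum.elim (-((a11⁻¹ * a12).mulVec (x : ext → ℝ))) (x : ext → ℝ),
              LinearMap.mem_ker.mpr (by
                simpa [Matrix.mulVecLin_apply] using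
                  mem_f (x : ext → ℝ) (by have hx := x.2; rwa [LinearMap.mem_ker, Matrix.mulVecLin_apply] at hx))⟩
            map_add' := fun x y => Subtype.ext (by
              funext i; cases i <;>
                simp [Matrix.mulVec_add, neg_add] <;> ring)
            map_smul' := fun c x => Subtype.ext (by
              funext i; cases i <;>
                simp [Matrix.mulVec_smul])
            invFun := fun y => ⟨(y : (int ⊕ ext) → ℝ) ∘ Sum.inr,
              LinearMap.mem_ker.mpr (by
                exact
                  (mem_g (y : (int ⊕ ext) → ℝ)
                    (by have hy := y.2; rwa [LinearMap.mem_ker, Matrix.mulVecLin_apply] at hy)).2)⟩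
            left_inv := fun x => Subtype.ext (by funext i; simp)
            right_inv := fun y => Subtype.ext (by
              funext i
              cases i with
              | inl i =>
                  have := (mem_g (y : (int ⊕ ext) → ℝ)
                    (by have hy := y.2; rwa [LinearMap.mem_ker, Matrix.mulVecLin_apply] at hy)).1
                  simpa using (congrFun this i).symm
              | inr i => rfl) }, fun x => rfl⟩
end

section
/- Let a11 be invertible and σ = a22 - a21 * a11⁻¹ * a12 its Schur complement. Then there is a linear equivalence between the cokernel ((int ⊕ ext) → ℝ) / range(S.mulVecLin) and the cokernel (ext → ℝ) / range(σ.mulVecLin). -/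
open Matrix

private lemma range_prodMap' {M N M' N' : Type*} [AddCommGroup M] [AddCommGroup N]
    [AddCommGroup M'] [AddCommGroup N'] [Module ℝ M] [Module ℝ N] [Module ℝ M'] [Module ℝ N']
    (f : M →ₗ[ℝ] M') (g : N →ₗ[ℝ] N') :
    LinearMap.range (f.prodMap g) = (LinearMap.range f).prod (LinearMap.range g) := by
  ext ⟨y₁, y₂⟩
  constructor
  · rintro ⟨⟨x₁, x₂⟩, hx⟩
    rw [← hx]
    exact ⟨⟨x₁, rfl⟩, ⟨x₂, rfl⟩⟩
  · rintro ⟨⟨x₁, rfl⟩, ⟨x₂, rfl⟩⟩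
    exact ⟨(x₁, x₂), rfl⟩

private def prodSubEquiv {M N : Type*} [AddCommGroup M] [AddCommGroup N]
    [Module ℝ M] [Module ℝ N] (p : Submodule ℝ M) (q : Submodule ℝ N) :
    (p.prod q) ≃ₗ[ℝ] p × q where
  toFun x := (⟨x.1.1, x.2.1⟩, ⟨x.1.2, x.2.2⟩)
  invFun x := ⟨(x.1.1, x.2.1), ⟨x.1.2, x.2.2⟩⟩
  map_add' x y := rfl
  map_smul' c x := rfl
  left_inv x := rfl
  right_inv x := rfl

private lemma rank_fromBlocks_one_zero_zero
    {int ext : Type*} [Fintype int] [Fintype ext] [DecidableEq int] [DecidableEq ext]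
    (σ : Matrix ext ext ℝ) :
    (Matrix.fromBlocks (1 : Matrix int int ℝ) 0 0 σ).rank = Fintype.card int + σ.rank := by
  classical
  set e : ((int ⊕ ext) → ℝ) ≃ₗ[ℝ] ((int → ℝ) × (ext → ℝ)) :=
    LinearEquiv.sumArrowLequivProdArrow int ext ℝ ℝ with he
  have hcomp : (Matrix.fromBlocks (1 : Matrix int int ℝ) 0 0 σ).mulVecLin =
      (e.symm.toLinearMap ∘ₗ (LinearMap.prodMap LinearMap.id σ.mulVecLin)) ∘ₗ e.toLinearMap := by
    refine LinearMap.ext fun x => ?_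
    funext i
    cases i <;>
      simp [he, Matrix.mulVecLin_apply, Matrix.fromBlocks_mulVec,
        LinearEquiv.sumArrowLequivProdArrow, Equiv.sumArrowEquivProdArrow]
  have hrange : LinearMap.range (Matrix.fromBlocks (1 : Matrix int int ℝ) 0 0 σ).mulVecLin =
      Submodule.map (e.symm : ((int → ℝ) × (ext → ℝ)) →ₗ[ℝ] ((int ⊕ ext) → ℝ)) ((⊤ : Submodule ℝ (int → ℝ)).prod
        (LinearMap.range σ.mulVecLin)) := by
    rw [hcomp, LinearMap.range_comp, LinearEquiv.range, Submodule.map_top,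
      LinearMap.range_comp, range_prodMap', LinearMap.range_id]
  rw [Matrix.rank, hrange]
  have h1 : Module.finrank ℝ (Submodule.map (e.symm : ((int → ℝ) × (ext → ℝ)) →ₗ[ℝ] ((int ⊕ ext) → ℝ)) ((⊤ : Submodule ℝ (int → ℝ)).prod
      (LinearMap.range σ.mulVecLin))) =
      Module.finrank ℝ ((⊤ : Submodule ℝ (int → ℝ)).prod (LinearMap.range σ.mulVecLin)) :=
    (LinearEquiv.finrank_map_eq e.symm _)
  rw [h1]
  have h2 := (prodSubEquiv (⊤ : Submodule ℝ (int → ℝ))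
    (LinearMap.range σ.mulVecLin)).finrank_eq
  rw [h2, Module.finrank_prod, finrank_top, Module.finrank_pi, Matrix.rank]

private lemma rank_fromBlocks_schur
    {int ext : Type*} [Fintype int] [Fintype ext] [DecidableEq int] [DecidableEq ext]
    (a11 : Matrix int int ℝ) (a12 : Matrix int ext ℝ)
    (a21 : Matrix ext int ℝ) (a22 : Matrix ext ext ℝ)
    (h : IsUnit a11.det) :
    (Matrix.fromBlocks a11 a12 a21 a22).rank =
      Fintype.card int + (a22 - a21 * a11⁻¹ * a12).rank := by
  classical
  haveI : Invertible a11 := Matrix.invertibleOfIsUnitDet a11 h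
  have hdec := Matrix.fromBlocks_eq_of_invertible₁₁ a11 a12 a21 a22
  have hσ : a22 - a21 * ⅟a11 * a12 = a22 - a21 * a11⁻¹ * a12 := by
    rw [Matrix.invOf_eq_nonsing_inv]
  set σ := a22 - a21 * a11⁻¹ * a12 with hσdef
  have hUL : IsUnit (Matrix.fromBlocks (1 : Matrix int int ℝ) 0 (a21 * ⅟a11) 1).det := by
    rw [Matrix.det_fromBlocks_zero₁₂]
    simp
  have hUR : IsUnit (Matrix.fromBlocks (1 : Matrix int int ℝ) (⅟a11 * a12) 0 1).det := by
    rw [Matrix.det_fromBlocks_zero₂₁]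
    simp
  rw [hdec, hσ]
  rw [Matrix.rank_mul_eq_left_of_isUnit_det _ _ hUR]
  have : (Matrix.fromBlocks (1 : Matrix int int ℝ) 0 (a21 * ⅟a11) 1 *
      Matrix.fromBlocks a11 0 0 σ).rank = (Matrix.fromBlocks a11 0 0 σ).rank :=
    Matrix.rank_mul_eq_right_of_isUnit_det _ _ hUL
  rw [this]
  have hfac : Matrix.fromBlocks a11 (0 : Matrix int ext ℝ) 0 σ =
      Matrix.fromBlocks a11 0 0 (1 : Matrix ext ext ℝ) * Matrix.fromBlocks 1 0 0 σ := by
    rw [Matrix.fromBlocks_multiply]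
    simp
  have hUD : IsUnit (Matrix.fromBlocks a11 (0 : Matrix int ext ℝ) 0
      (1 : Matrix ext ext ℝ)).det := by
    rw [Matrix.det_fromBlocks_zero₂₁]
    simpa using h
  rw [hfac, Matrix.rank_mul_eq_right_of_isUnit_det _ _ hUD,
    rank_fromBlocks_one_zero_zero]

theorem schur_cokernel_equiv
    {int ext : Type*} [Fintype int] [Fintype ext] [DecidableEq int] [DecidableEq ext]
    (a11 : Matrix int int ℝ) (a12 : Matrix int ext ℝ)
    (a21 : Matrix ext int ℝ) (a22 : Matrix ext ext ℝ)
    (h : IsUnit a11.det) :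
    Nonempty
      ((((int ⊕ ext) → ℝ) ⧸ LinearMap.range (Matrix.fromBlocks a11 a12 a21 a22).mulVecLin)
        ≃ₗ[ℝ] ((ext → ℝ) ⧸ LinearMap.range (a22 - a21 * a11⁻¹ * a12).mulVecLin)) := by
  classical
  apply FiniteDimensional.nonempty_linearEquiv_of_finrank_eq
  have q1 := Submodule.finrank_quotient_add_finrank
    (LinearMap.range (Matrix.fromBlocks a11 a12 a21 a22).mulVecLin)
  have q2 := Submodule.finrank_quotient_add_finrank
    (LinearMap.range (a22 - a21 * a11⁻¹ * a12).mulVecLin)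
  have hr := rank_fromBlocks_schur a11 a12 a21 a22 h
  have hdim1 : Module.finrank ℝ ((int ⊕ ext) → ℝ) = Fintype.card int + Fintype.card ext := by
    simp [Module.finrank_pi]
  have hdim2 : Module.finrank ℝ (ext → ℝ) = Fintype.card ext := by
    simp [Module.finrank_pi]
  rw [hdim1] at q1
  rw [hdim2] at q2
  have hle : (a22 - a21 * a11⁻¹ * a12).rank ≤ Fintype.card ext :=
    Matrix.rank_le_card_width _
  unfold Matrix.rank at hr hle
  omega
end

section
/- Assume the compatibility conditions ker a11 ≤ ker a21 and range a12 ≤ range a11. Then there exists a unique linear map σ : V2 →ₗ[ℝ] W2 such that for every x : V2 and every y : V1 with a11 y = a12 x, one has σ x = a22 x - a21 y. (In particular the value a22 x - a21 y does not depend on the choice of the lift y of a12 x through a11.) -/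
theorem generalized_schur_exists_unique
    {V1 V2 W1 W2 : Type*}
    [AddCommGroup V1] [Module ℝ V1] [AddCommGroup V2] [Module ℝ V2]
    [AddCommGroup W1] [Module ℝ W1] [AddCommGroup W2] [Module ℝ W2]
    (a11 : V1 →ₗ[ℝ] W1) (a12 : V2 →ₗ[ℝ] W1)
    (a21 : V1 →ₗ[ℝ] W2) (a22 : V2 →ₗ[ℝ] W2)
    (hker : LinearMap.ker a11 ≤ LinearMap.ker a21)
    (hran : LinearMap.range a12 ≤ LinearMap.range a11) :
    ∃! σ : V2 →ₗ[ℝ] W2, ∀ (x : V2) (y : V1), a11 y = a12 x → σ x = a22 x - a21 y := by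
  have hlift : ∀ x : V2, ∃ y : V1, a11 y = a12 x := fun x =>
    hran (LinearMap.mem_range.mpr ⟨x, rfl⟩)
  choose ℓ hℓ using hlift
  -- independence of choice
  have indep : ∀ (x : V2) (y : V1), a11 y = a12 x → a21 y = a21 (ℓ x) := by
    intro x y hy
    have : a11 (y - ℓ x) = 0 := by simp [map_sub, hy, hℓ x]
    have := hker (LinearMap.mem_ker.mpr this)
    have := LinearMap.mem_ker.mp this
    rw [map_sub, sub_eq_zero] at this
    exact this
  refine ⟨{ toFun := fun x => a22 x - a21 (ℓ x),
            map_add' := ?_, map_smul' := ?_ }, ?_, ?_⟩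
  · intro x x'
    have h1 : a21 (ℓ x + ℓ x') = a21 (ℓ (x + x')) := by
      apply indep
      simp [map_add, hℓ]
    rw [map_add] at h1
    simp only [map_add]
    rw [← h1]; abel
  · intro c x
    have h1 : a21 (c • ℓ x) = a21 (ℓ (c • x)) := by
      apply indep
      simp [map_smul, hℓ]
    rw [map_smul] at h1
    simp only [map_smul, RingHom.id_apply]
    rw [← h1, smul_sub]
  · intro x y hy
    simp [indep x y hy]
  · intro τ hτ
    ext x
    have h1 := hτ x (ℓ x) (hℓ x)
    simp [h1, indep]
end

section
/- Assume ker a11 ≤ ker a21. If g, g' : W1 →ₗ[ℝ] V1 are two linear maps satisfying a11 ∘ g ∘ a12 = a12 and a11 ∘ g' ∘ a12 = a12, then a21 ∘ g ∘ a12 = a21 ∘ g' ∘ a12. Consequently the generalized Schur complement σ = a22 - a21 ∘ g ∘ a12 does not depend on the choice of such g. -/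
theorem generalized_schur_independent_of_inverse
    {V1 V2 W1 W2 : Type*}
    [AddCommGroup V1] [Module ℝ V1] [AddCommGroup V2] [Module ℝ V2]
    [AddCommGroup W1] [Module ℝ W1] [AddCommGroup W2] [Module ℝ W2]
    (a11 : V1 →ₗ[ℝ] W1) (a12 : V2 →ₗ[ℝ] W1)
    (a21 : V1 →ₗ[ℝ] W2) (a22 : V2 →ₗ[ℝ] W2)
    (hker : LinearMap.ker a11 ≤ LinearMap.ker a21)
    (g g' : W1 →ₗ[ℝ] V1)
    (hg : a11 ∘ₗ g ∘ₗ a12 = a12) (hg' : a11 ∘ₗ g' ∘ₗ a12 = a12) :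
    a21 ∘ₗ g ∘ₗ a12 = a21 ∘ₗ g' ∘ₗ a12 ∧
      a22 - a21 ∘ₗ g ∘ₗ a12 = a22 - a21 ∘ₗ g' ∘ₗ a12 := by
  have h : a21 ∘ₗ g ∘ₗ a12 = a21 ∘ₗ g' ∘ₗ a12 := by
    ext v
    have hk : g (a12 v) - g' (a12 v) ∈ LinearMap.ker a11 := by
      have h1 := congrFun (congrArg DFunLike.coe hg) v
      have h2 := congrFun (congrArg DFunLike.coe hg') v
      simp only [LinearMap.comp_apply] at h1 h2
      simp [LinearMap.mem_ker, h1, h2]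
    have := hker hk
    simp only [LinearMap.mem_ker, map_sub, sub_eq_zero] at this
    simpa using this
  exact ⟨h, by rw [h]⟩
end

section
/- Assume the compatibility conditions ker a11 ≤ ker a21 and range a12 ≤ range a11, and let g : W1 →ₗ[ℝ] V1 satisfy a11 ∘ g ∘ a11 = a11. Set σ = a22 - a21 ∘ g ∘ a12. Then there exist linear automorphisms e : (V1 × V2) ≃ₗ[ℝ] (V1 × V2) and f : (W1 × W2) ≃ₗ[ℝ] (W1 × W2) such that f ∘ S ∘ e = LinearMap.prodMap a11 σ, where S is the block linear map S(v1, v2) = (a11 v1 + a12 v2, a21 v1 + a22 v2). That is, S is isomorphic in the arrow category to the direct sum a11 ⊕ σ. -/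
theorem generalized_schur_arrow_decomposition
    {V1 V2 W1 W2 : Type*}
    [AddCommGroup V1] [Module ℝ V1] [AddCommGroup V2] [Module ℝ V2]
    [AddCommGroup W1] [Module ℝ W1] [AddCommGroup W2] [Module ℝ W2]
    (a11 : V1 →ₗ[ℝ] W1) (a12 : V2 →ₗ[ℝ] W1)
    (a21 : V1 →ₗ[ℝ] W2) (a22 : V2 →ₗ[ℝ] W2)
    (hker : LinearMap.ker a11 ≤ LinearMap.ker a21)
    (hran : LinearMap.range a12 ≤ LinearMap.range a11)
    (g : W1 →ₗ[ℝ] V1) (hg : a11 ∘ₗ g ∘ₗ a11 = a11) :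
    ∃ (e : (V1 × V2) ≃ₗ[ℝ] (V1 × V2)) (f : (W1 × W2) ≃ₗ[ℝ] (W1 × W2)),
      f.toLinearMap ∘ₗ ((a11.coprod a12).prod (a21.coprod a22)) ∘ₗ e.toLinearMap =
        LinearMap.prodMap a11 (a22 - a21 ∘ₗ g ∘ₗ a12) := by
  -- key facts
  have key1 : ∀ v2 : V2, a11 (g (a12 v2)) = a12 v2 := by
    intro v2
    obtain ⟨x, hx⟩ := hran (LinearMap.mem_range_self a12 v2)
    rw [← hx]
    have := congrArg (fun h : V1 →ₗ[ℝ] W1 => h x) hg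
    simpa using this
  have key2 : ∀ v1 : V1, a21 (g (a11 v1)) = a21 v1 := by
    intro v1
    have hk : v1 - g (a11 v1) ∈ LinearMap.ker a11 := by
      have := congrArg (fun h : V1 →ₗ[ℝ] W1 => h v1) hg
      simp only [LinearMap.comp_apply] at this
      simp [LinearMap.mem_ker, map_sub, this]
    have := hker hk
    simp only [LinearMap.mem_ker, map_sub, sub_eq_zero] at this
    exact this.symm
  refine ⟨LinearEquiv.ofLinear
      ((LinearMap.fst ℝ V1 V2 - (g ∘ₗ a12) ∘ₗ LinearMap.snd ℝ V1 V2).prod (LinearMap.snd ℝ V1 V2))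
      ((LinearMap.fst ℝ V1 V2 + (g ∘ₗ a12) ∘ₗ LinearMap.snd ℝ V1 V2).prod (LinearMap.snd ℝ V1 V2))
      (by ext x <;> simp [LinearMap.prod_apply, LinearMap.add_apply, LinearMap.sub_apply, LinearMap.comp_apply])
      (by ext x <;> simp [LinearMap.prod_apply, LinearMap.add_apply, LinearMap.sub_apply, LinearMap.comp_apply]),
    LinearEquiv.ofLinear
      ((LinearMap.fst ℝ W1 W2).prod (LinearMap.snd ℝ W1 W2 - (a21 ∘ₗ g) ∘ₗ LinearMap.fst ℝ W1 W2))
      ((LinearMap.fst ℝ W1 W2).prod (LinearMap.snd ℝ W1 W2 + (a21 ∘ₗ g) ∘ₗ LinearMap.fst ℝ W1 W2))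
      (by ext x <;> simp [LinearMap.prod_apply, LinearMap.add_apply, LinearMap.sub_apply, LinearMap.comp_apply])
      (by ext x <;> simp [LinearMap.prod_apply, LinearMap.add_apply, LinearMap.sub_apply, LinearMap.comp_apply]), ?_⟩
  apply LinearMap.ext
  rintro ⟨v1, v2⟩
  simp only [LinearMap.comp_apply, LinearEquiv.ofLinear_apply, LinearMap.prod_apply,
    LinearMap.coprod_apply, LinearMap.prodMap_apply, LinearMap.sub_apply, LinearMap.add_apply,
    LinearMap.fst_apply, LinearMap.snd_apply, Function.prod, Prod.map_apply, map_add, map_sub,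
    key1, key2, Prod.mk.injEq, LinearEquiv.ofLinear_apply, LinearEquiv.coe_coe,
    LinearMap.coe_comp, Function.comp_apply, Prod.fst, Prod.snd]
  constructor
  · abel
  · abel
end

section
/- Assume the compatibility conditions ker a11 ≤ ker a21 and range a12 ≤ range a11, and let g : W1 →ₗ[ℝ] V1 satisfy a11 ∘ g ∘ a11 = a11. Set σ = a22 - a21 ∘ g ∘ a12. Then there is a linear equivalence ker S ≃ₗ[ℝ] (ker a11) × (ker σ), where S is the block linear map S(v1, v2) = (a11 v1 + a12 v2, a21 v1 + a22 v2). -/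
/-- Auxiliary: `p.prod q` as a submodule is equivalent to the product of subtypes. -/
def subProdEquivAux {R M N : Type*} [Semiring R] [AddCommMonoid M] [AddCommMonoid N]
    [Module R M] [Module R N] (p : Submodule R M) (q : Submodule R N) :
    (p.prod q) ≃ₗ[R] p × q where
  toFun x := (⟨x.1.1, x.2.1⟩, ⟨x.1.2, x.2.2⟩)
  invFun x := ⟨(x.1.1, x.2.1), x.1.2, x.2.2⟩
  map_add' x y := rfl
  map_smul' c x := rfl
  left_inv x := rfl
  right_inv x := rfl

theorem generalized_schur_kernel_equiv
    {V1 V2 W1 W2 : Type*}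
    [AddCommGroup V1] [Module ℝ V1] [AddCommGroup V2] [Module ℝ V2]
    [AddCommGroup W1] [Module ℝ W1] [AddCommGroup W2] [Module ℝ W2]
    (a11 : V1 →ₗ[ℝ] W1) (a12 : V2 →ₗ[ℝ] W1)
    (a21 : V1 →ₗ[ℝ] W2) (a22 : V2 →ₗ[ℝ] W2)
    (hker : LinearMap.ker a11 ≤ LinearMap.ker a21)
    (hran : LinearMap.range a12 ≤ LinearMap.range a11)
    (g : W1 →ₗ[ℝ] V1) (hg : a11 ∘ₗ g ∘ₗ a11 = a11) :
    Nonempty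
      (LinearMap.ker ((a11.coprod a12).prod (a21.coprod a22)) ≃ₗ[ℝ]
        LinearMap.ker a11 × LinearMap.ker (a22 - a21 ∘ₗ g ∘ₗ a12)) := by
  have key : ∀ v2 : V2, a11 (g (a12 v2)) = a12 v2 := by
    intro v2
    obtain ⟨x, hx⟩ := hran (LinearMap.mem_range_self a12 v2)
    rw [← hx]
    have := congrArg (fun f : V1 →ₗ[ℝ] W1 => f x) hg
    simpa using this
  set T : V1 × V2 →ₗ[ℝ] V1 × V2 :=
    LinearMap.prod (LinearMap.fst ℝ V1 V2 + (g ∘ₗ a12) ∘ₗ LinearMap.snd ℝ V1 V2)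
      (LinearMap.snd ℝ V1 V2) with hT
  set T' : V1 × V2 →ₗ[ℝ] V1 × V2 :=
    LinearMap.prod (LinearMap.fst ℝ V1 V2 - (g ∘ₗ a12) ∘ₗ LinearMap.snd ℝ V1 V2)
      (LinearMap.snd ℝ V1 V2) with hT'
  let e : (V1 × V2) ≃ₗ[ℝ] (V1 × V2) :=
    LinearEquiv.ofLinear T T' (by ext x <;> simp [hT, hT']) (by ext x <;> simp [hT, hT'])
  have heT : ∀ x, e x = (x.1 + g (a12 x.2), x.2) := fun x => rfl
  have heq : Submodule.map (e : V1 × V2 →ₗ[ℝ] V1 × V2)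
      (LinearMap.ker ((a11.coprod a12).prod (a21.coprod a22))) =
      (LinearMap.ker a11).prod (LinearMap.ker (a22 - a21 ∘ₗ g ∘ₗ a12)) := by
    ext x
    rw [Submodule.mem_map]
    constructor
    · rintro ⟨p, hp, rfl⟩
      rw [LinearMap.mem_ker] at hp
      have h1 : a11 p.1 + a12 p.2 = 0 := congrArg Prod.fst hp
      have h2 : a21 p.1 + a22 p.2 = 0 := congrArg Prod.snd hp
      rw [show (e : V1 × V2 →ₗ[ℝ] V1 × V2) p = (p.1 + g (a12 p.2), p.2) from rfl]
      have hm1 : a11 (p.1 + g (a12 p.2)) = 0 := by simp [key, h1]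
      constructor
      · exact hm1
      · show (a22 - a21 ∘ₗ g ∘ₗ a12) p.2 = 0
        have h3 := hker (LinearMap.mem_ker.mpr hm1)
        rw [LinearMap.mem_ker] at h3
        simp only [map_add] at h3
        simp only [LinearMap.sub_apply, LinearMap.comp_apply]
        linear_combination (norm := module) h2 - h3
    · rintro ⟨hk, hs⟩
      have hk' : a11 x.1 = 0 := hk
      have hs' : (a22 - a21 ∘ₗ g ∘ₗ a12) x.2 = 0 := hs
      simp only [LinearMap.sub_apply, LinearMap.comp_apply] at hs'
      have hk'' : a21 x.1 = 0 := hker (LinearMap.mem_ker.mpr hk')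
      refine ⟨(x.1 - g (a12 x.2), x.2), ?_, ?_⟩
      · rw [LinearMap.mem_ker]
        ext
        · show a11 (x.1 - g (a12 x.2)) + a12 x.2 = 0
          simp [key, hk']
        · show a21 (x.1 - g (a12 x.2)) + a22 x.2 = 0
          rw [map_sub, hk'', zero_sub]
          linear_combination (norm := module) hs'
      · rw [show (e : V1 × V2 →ₗ[ℝ] V1 × V2) (x.1 - g (a12 x.2), x.2)
            = (x.1 - g (a12 x.2) + g (a12 x.2), x.2) from rfl]
        simp
  exact ⟨((e.submoduleMap _).trans (LinearEquiv.ofEq _ _ heq)).trans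
    (subProdEquivAux _ _)⟩
end

section
/- Assume the compatibility conditions ker a11 ≤ ker a21 and range a12 ≤ range a11, and let g : W1 →ₗ[ℝ] V1 satisfy a11 ∘ g ∘ a11 = a11. Set σ = a22 - a21 ∘ g ∘ a12. Then there is a linear equivalence between the cokernel (W1 × W2) / range S and the product of cokernels (W1 / range a11) × (W2 / range σ), where S is the block linear map S(v1, v2) = (a11 v1 + a12 v2, a21 v1 + a22 v2). -/
/-- Quotient of a product by a product submodule is the product of quotients. -/
noncomputable def prodQuotEquiv {R M N : Type*} [Ring R] [AddCommGroup M] [Module R M]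
    [AddCommGroup N] [Module R N] (p : Submodule R M) (q : Submodule R N) :
    ((M × N) ⧸ p.prod q) ≃ₗ[R] (M ⧸ p) × (N ⧸ q) := by
  have hker : LinearMap.ker (p.mkQ.prodMap q.mkQ) = p.prod q := by
    rw [LinearMap.ker_prodMap, Submodule.ker_mkQ, Submodule.ker_mkQ]
  refine LinearEquiv.ofBijective
    ((p.prod q).liftQ (p.mkQ.prodMap q.mkQ) hker.ge) ⟨?_, ?_⟩
  · rw [← LinearMap.ker_eq_bot]
    exact Submodule.ker_liftQ_eq_bot _ _ _ hker.le
  · rintro ⟨a, b⟩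
    obtain ⟨x, rfl⟩ := Submodule.Quotient.mk_surjective p a
    obtain ⟨y, rfl⟩ := Submodule.Quotient.mk_surjective q b
    exact ⟨Submodule.Quotient.mk (x, y), rfl⟩

theorem generalized_schur_cokernel_equiv
    {V1 V2 W1 W2 : Type*}
    [AddCommGroup V1] [Module ℝ V1] [AddCommGroup V2] [Module ℝ V2]
    [AddCommGroup W1] [Module ℝ W1] [AddCommGroup W2] [Module ℝ W2]
    (a11 : V1 →ₗ[ℝ] W1) (a12 : V2 →ₗ[ℝ] W1)
    (a21 : V1 →ₗ[ℝ] W2) (a22 : V2 →ₗ[ℝ] W2)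
    (hker : LinearMap.ker a11 ≤ LinearMap.ker a21)
    (hran : LinearMap.range a12 ≤ LinearMap.range a11)
    (g : W1 →ₗ[ℝ] V1) (hg : a11 ∘ₗ g ∘ₗ a11 = a11) :
    Nonempty
      (((W1 × W2) ⧸ LinearMap.range ((a11.coprod a12).prod (a21.coprod a22))) ≃ₗ[ℝ]
        (W1 ⧸ LinearMap.range a11) × (W2 ⧸ LinearMap.range (a22 - a21 ∘ₗ g ∘ₗ a12))) := by
  set σ : V2 →ₗ[ℝ] W2 := a22 - a21 ∘ₗ g ∘ₗ a12 with hσ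
  set S : (V1 × V2) →ₗ[ℝ] (W1 × W2) := (a11.coprod a12).prod (a21.coprod a22) with hS
  -- row operation equivalence T(w1,w2) = (w1, w2 - a21 (g w1))
  set T : (W1 × W2) ≃ₗ[ℝ] (W1 × W2) :=
    LinearEquiv.ofLinear
      ((LinearMap.fst ℝ W1 W2).prod
        (LinearMap.snd ℝ W1 W2 - (a21 ∘ₗ g) ∘ₗ LinearMap.fst ℝ W1 W2))
      ((LinearMap.fst ℝ W1 W2).prod
        (LinearMap.snd ℝ W1 W2 + (a21 ∘ₗ g) ∘ₗ LinearMap.fst ℝ W1 W2))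
      (by apply LinearMap.ext; rintro ⟨x, y⟩; simp) (by apply LinearMap.ext; rintro ⟨x, y⟩; simp) with hT
  have ha : ∀ v1 : V1, a21 (g (a11 v1)) = a21 v1 := by
    intro v1
    have h1 : a11 (g (a11 v1) - v1) = 0 := by
      have := congrArg (fun f => f v1) hg
      simp only [LinearMap.comp_apply] at this
      simp [map_sub, this]
    have := hker h1
    simpa [map_sub, sub_eq_zero] using this
  have hTS : ∀ v1 v2, (T : (W1 × W2) →ₗ[ℝ] W1 × W2) (S (v1, v2)) = (a11 v1 + a12 v2, σ v2) := by
    intro v1 v2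
    simp only [hT, hS, LinearEquiv.ofLinear_apply, LinearEquiv.coe_coe,
      LinearMap.prod_apply, Function.prod, LinearMap.coprod_apply, LinearMap.sub_apply,
      LinearMap.comp_apply, LinearMap.fst_apply, LinearMap.snd_apply, hσ, Prod.mk.injEq]
    refine ⟨trivial, ?_⟩
    rw [map_add g, map_add a21, ha v1]
    abel
  have key : Submodule.map (T : (W1 × W2) →ₗ[ℝ] (W1 × W2)) (LinearMap.range S)
      = (LinearMap.range a11).prod (LinearMap.range σ) := by
    apply le_antisymm
    · rintro _ ⟨_, ⟨⟨v1, v2⟩, rfl⟩, rfl⟩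
      rw [hTS v1 v2]
      obtain ⟨v0, hv0⟩ := hran ⟨v2, rfl⟩
      exact ⟨⟨v1 + v0, by simp [map_add, hv0]⟩, ⟨v2, rfl⟩⟩
    · rintro ⟨w1, w2⟩ ⟨⟨u1, hu1⟩, ⟨v2, hv2⟩⟩
      obtain ⟨v0, hv0⟩ := hran ⟨v2, rfl⟩
      refine ⟨S (u1 - v0, v2), ⟨_, rfl⟩, ?_⟩
      rw [hTS]
      simp [map_sub, hv0, hu1, hv2]
  exact ⟨(Submodule.Quotient.equiv _ _ T key).trans
    (prodQuotEquiv (LinearMap.range a11) (LinearMap.range σ))⟩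
end

section
/- Assume the compatibility conditions ker a11 ≤ ker a21 and range a12 ≤ range a11, and let g : W1 →ₗ[ℝ] V1 satisfy a11 ∘ g ∘ a11 = a11. Set σ = a22 - a21 ∘ g ∘ a12 and let S be the block linear map S(v1, v2) = (a11 v1 + a12 v2, a21 v1 + a22 v2). Then: (i) every pair (y, 0) with y ∈ ker a11 lies in ker S, so the image of ker a11 under the embedding v1 ↦ (v1, 0) is a submodule of ker S; and (ii) the quotient of ker S by this submodule is linearly equivalent to ker σ. This is the isomorphism ker S / ker S_γ ≅ ker S' of the topological reduction theorem. -/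
theorem reduction_kernel_quotient_equiv
    {V1 V2 W1 W2 : Type*}
    [AddCommGroup V1] [Module ℝ V1] [AddCommGroup V2] [Module ℝ V2]
    [AddCommGroup W1] [Module ℝ W1] [AddCommGroup W2] [Module ℝ W2]
    (a11 : V1 →ₗ[ℝ] W1) (a12 : V2 →ₗ[ℝ] W1)
    (a21 : V1 →ₗ[ℝ] W2) (a22 : V2 →ₗ[ℝ] W2)
    (hker : LinearMap.ker a11 ≤ LinearMap.ker a21)
    (hran : LinearMap.range a12 ≤ LinearMap.range a11)
    (g : W1 →ₗ[ℝ] V1) (hg : a11 ∘ₗ g ∘ₗ a11 = a11) :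
    (Submodule.map (LinearMap.inl ℝ V1 V2) (LinearMap.ker a11) ≤
        LinearMap.ker ((a11.coprod a12).prod (a21.coprod a22))) ∧
      Nonempty
        ((LinearMap.ker ((a11.coprod a12).prod (a21.coprod a22)) ⧸
            Submodule.comap
              (LinearMap.ker ((a11.coprod a12).prod (a21.coprod a22))).subtype
              (Submodule.map (LinearMap.inl ℝ V1 V2) (LinearMap.ker a11))) ≃ₗ[ℝ]
          LinearMap.ker (a22 - a21 ∘ₗ g ∘ₗ a12)) := by
  set S := (a11.coprod a12).prod (a21.coprod a22) with hS
  have hga : ∀ v : V1, a21 (g (a11 v)) = a21 v := by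
    intro v
    have h1 : a11 (g (a11 v) - v) = 0 := by
      have := congrArg (fun f : V1 →ₗ[ℝ] W1 => f v) hg
      simp only [LinearMap.comp_apply] at this
      simp [this]
    have := hker h1
    simpa [sub_eq_zero] using this
  have hmem : ∀ p : V1 × V2, p ∈ LinearMap.ker S ↔
      a11 p.1 + a12 p.2 = 0 ∧ a21 p.1 + a22 p.2 = 0 := by
    intro p
    simp [hS, LinearMap.mem_ker, LinearMap.prod_apply, Prod.ext_iff]
  have part1 : Submodule.map (LinearMap.inl ℝ V1 V2) (LinearMap.ker a11) ≤
      LinearMap.ker S := by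
    rintro p ⟨v, hv, rfl⟩
    have hv' : a11 v = 0 := hv
    have hv2 : a21 v = 0 := hker hv'
    rw [hmem]
    exact ⟨by simp [hv'], by simp [hv2]⟩
  refine ⟨part1, ?_⟩
  -- the map ker S → ker σ, (v1, v2) ↦ v2
  set σ := a22 - a21 ∘ₗ g ∘ₗ a12 with hσ
  have hφmem : ∀ p : LinearMap.ker S, (p : V1 × V2).2 ∈ LinearMap.ker σ := by
    rintro ⟨⟨v1, v2⟩, hp⟩
    rw [hmem] at hp
    obtain ⟨h1, h2⟩ := hp
    have h1' : a12 v2 = a11 (-v1) := by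
      have := eq_neg_of_add_eq_zero_right h1; simp [this]
    simp only [LinearMap.mem_ker, hσ, LinearMap.sub_apply, LinearMap.comp_apply]
    rw [h1', hga (-v1)]
    have := eq_neg_of_add_eq_zero_right h2
    simp [this]
  let φ : LinearMap.ker S →ₗ[ℝ] LinearMap.ker σ :=
    LinearMap.codRestrict _ ((LinearMap.snd ℝ V1 V2) ∘ₗ (LinearMap.ker S).subtype) hφmem
  have hsurj : Function.Surjective φ := by
    rintro ⟨v2, hv2⟩
    obtain ⟨u, hu⟩ := hran (LinearMap.mem_range_self a12 v2)
    refine ⟨⟨(-(g (a12 v2)), v2), ?_⟩, ?_⟩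
    · rw [hmem]
      constructor
      · have : a11 (g (a12 v2)) = a12 v2 := by
          rw [← hu]
          have := congrArg (fun f : V1 →ₗ[ℝ] W1 => f u) hg
          simpa [LinearMap.comp_apply, hu] using this
        simp [this]
      · have hσv : a22 v2 = a21 (g (a12 v2)) := by
          have := hv2
          simp only [hσ, LinearMap.mem_ker, LinearMap.sub_apply,
            LinearMap.comp_apply, sub_eq_zero] at this
          exact this
        simp [hσv]
    · rfl
  have hkerφ : LinearMap.ker φ =
      Submodule.comap (LinearMap.ker S).subtype
        (Submodule.map (LinearMap.inl ℝ V1 V2) (LinearMap.ker a11)) := by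
    ext ⟨⟨v1, v2⟩, hp⟩
    simp only [LinearMap.mem_ker, Submodule.mem_comap, Submodule.subtype_apply]
    constructor
    · intro h
      have hv2 : v2 = 0 := by
        have := congrArg Subtype.val h
        exact this
      subst hv2
      rw [hmem] at hp
      exact ⟨v1, by simpa using hp.1, rfl⟩
    · rintro ⟨v, hv, hveq⟩
      have : v = v1 ∧ (0 : V2) = v2 := by
        simpa [LinearMap.inl, Prod.ext_iff] using hveq
      ext
      exact this.2.symm
  exact ⟨(Submodule.quotEquivOfEq _ _ hkerφ.symm).trans (φ.quotKerEquivOfSurjective hsurj)⟩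
end

section
/- Let φ1 : E → Option E' be a (pointed) edge map and let κ : (E →₀ ℝ) →ₗ[ℝ] (E' →₀ ℝ) be its linearization, i.e. the linear extension sending the basis vector of e to the basis vector of e' if φ1 e = some e' and to 0 if φ1 e = none. Let φ0 : (V → ℝ) →ₗ[ℝ] (V' → ℝ) be a linear map. Suppose that for all e : E and e' : E', φ1 e = some e' implies φ0 (s e) = s' e' and φ0 (t e) = t' e', and that φ1 e = none implies φ0 (s e) = φ0 (t e) (degenerate image). Define the stoichiometric maps S : (E →₀ ℝ) →ₗ[ℝ] (V → ℝ) as the linear extension of e ↦ t e - s e, and S' : (E' →₀ ℝ) →ₗ[ℝ] (V' → ℝ) as the linear extension of e' ↦ t' e' - s' e'. Then φ0 ∘ S = S' ∘ κ; that is, stoichiometry sends a CRN morphism to a morphism of quiver representations (a commuting square in the arrow category of Vect). -/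
theorem stoich_is_functorial
    {E E' V V' : Type*}
    (s t : E → V → ℝ) (s' t' : E' → V' → ℝ)
    (φ1 : E → Option E')
    (κ : (E →₀ ℝ) →ₗ[ℝ] (E' →₀ ℝ))
    (hκsome : ∀ (e : E) (e' : E'), φ1 e = some e' →
      κ (Finsupp.single e 1) = Finsupp.single e' 1)
    (hκnone : ∀ e : E, φ1 e = none → κ (Finsupp.single e 1) = 0)
    (φ0 : (V → ℝ) →ₗ[ℝ] (V' → ℝ))
    (hs : ∀ (e : E) (e' : E'), φ1 e = some e' → φ0 (s e) = s' e')
    (ht : ∀ (e : E) (e' : E'), φ1 e = some e' → φ0 (t e) = t' e')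
    (hdeg : ∀ e : E, φ1 e = none → φ0 (s e) = φ0 (t e)) :
    φ0 ∘ₗ Finsupp.linearCombination ℝ (fun e => t e - s e) =
      (Finsupp.linearCombination ℝ (fun e' => t' e' - s' e')) ∘ₗ κ := by
  apply Finsupp.lhom_ext
  intro e b
  have hb : (Finsupp.single e b : E →₀ ℝ) = b • Finsupp.single e 1 := by
    rw [Finsupp.smul_single, smul_eq_mul, mul_one]
  rw [hb, map_smul, map_smul]
  congr 1
  simp only [LinearMap.comp_apply, Finsupp.linearCombination_single, one_smul]
  cases h : φ1 e with
  | none =>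
      rw [hκnone e h, map_zero, map_sub, hdeg e h, sub_self]
  | some e' =>
      rw [hκsome e e' h, Finsupp.linearCombination_single, one_smul,
        map_sub, hs e e' h, ht e e' h]
end

section
/- Let a11 be invertible and σ = a22 - a21 * a11⁻¹ * a12 its Schur complement, and suppose additionally that int and ext index finite-dimensional spaces (automatic since they are finite types). Then the dimension of the kernel of S.mulVecLin equals the dimension of the kernel of σ.mulVecLin, and the dimension of the cokernel ((int ⊕ ext) → ℝ)/range(S.mulVecLin) equals the dimension of the cokernel (ext → ℝ)/range(σ.mulVecLin). -/
open Matrix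

-- nullity of block diagonal matrix with invertible top-left block
private lemma ker_blockdiag_finrank {int ext : Type*} [Fintype int] [Fintype ext]
    [DecidableEq int] [DecidableEq ext]
    (a11 : Matrix int int ℝ) (σ : Matrix ext ext ℝ) (h : IsUnit a11.det) :
    Module.finrank ℝ (LinearMap.ker (Matrix.fromBlocks a11 0 0 σ).mulVecLin) =
      Module.finrank ℝ (LinearMap.ker σ.mulVecLin) := by
  classical
  set E : ((int → ℝ) × (ext → ℝ)) ≃ₗ[ℝ] ((int ⊕ ext) → ℝ) :=
    (LinearEquiv.sumArrowLequivProdArrow int ext ℝ ℝ).symm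
  set J : (ext → ℝ) →ₗ[ℝ] ((int ⊕ ext) → ℝ) :=
    E.toLinearMap.comp (LinearMap.inr ℝ (int → ℝ) (ext → ℝ)) with hJdef
  have hJapp : ∀ (y : ext → ℝ), J y = Sum.elim (0 : int → ℝ) y := fun y => rfl
  have hJinj : Function.Injective J :=
    E.injective.comp (LinearMap.inr_injective)
  have hkey : LinearMap.ker (Matrix.fromBlocks a11 0 0 σ).mulVecLin =
      Submodule.map J (LinearMap.ker σ.mulVecLin) := by
    ext x
    simp only [LinearMap.mem_ker, Submodule.mem_map]
    constructor
    · intro hx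
      have hx' : (Matrix.fromBlocks a11 0 0 σ).mulVec x = 0 := hx
      rw [← Sum.elim_comp_inl_inr x, fromBlocks_mulVec] at hx'
      have h1 : a11.mulVec (x ∘ Sum.inl) + (0 : Matrix int ext ℝ).mulVec (x ∘ Sum.inr) = 0 := by
        have := congrArg (fun f => f ∘ Sum.inl) hx'
        funext i; exact congrFun (congrArg (fun f => f ∘ Sum.inl) hx') i
      have h2 : (0 : Matrix ext int ℝ).mulVec (x ∘ Sum.inl) + σ.mulVec (x ∘ Sum.inr) = 0 := by
        funext i; exact congrFun (congrArg (fun f => f ∘ Sum.inr) hx') i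
      rw [Matrix.zero_mulVec, add_zero] at h1
      rw [Matrix.zero_mulVec, zero_add] at h2
      have hx1 : x ∘ Sum.inl = 0 := by
        have := congrArg (fun v => a11⁻¹.mulVec v) h1
        simpa [Matrix.mulVec_mulVec, Matrix.nonsing_inv_mul _ h] using this
      refine ⟨x ∘ Sum.inr, h2, ?_⟩
      rw [hJapp, ← hx1, Sum.elim_comp_inl_inr]
    · rintro ⟨y, hy, rfl⟩
      rw [hJapp]
      show (Matrix.fromBlocks a11 0 0 σ).mulVec (Sum.elim (0 : int → ℝ) y) = 0
      rw [Matrix.mulVecLin_apply] at hy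
      rw [fromBlocks_mulVec]
      funext s
      rcases s with i | i <;>
        simp [Matrix.zero_mulVec, Matrix.mulVec_zero, hy]
  rw [hkey]
  exact (LinearEquiv.finrank_eq (Submodule.equivMapOfInjective J hJinj _)).symm

theorem schur_homology_dimensions
    {int ext : Type*} [Fintype int] [Fintype ext] [DecidableEq int] [DecidableEq ext]
    (a11 : Matrix int int ℝ) (a12 : Matrix int ext ℝ)
    (a21 : Matrix ext int ℝ) (a22 : Matrix ext ext ℝ)
    (h : IsUnit a11.det) :
    Module.finrank ℝ (LinearMap.ker (Matrix.fromBlocks a11 a12 a21 a22).mulVecLin) =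
      Module.finrank ℝ (LinearMap.ker (a22 - a21 * a11⁻¹ * a12).mulVecLin) ∧
    Module.finrank ℝ
        (((int ⊕ ext) → ℝ) ⧸ LinearMap.range (Matrix.fromBlocks a11 a12 a21 a22).mulVecLin) =
      Module.finrank ℝ
        ((ext → ℝ) ⧸ LinearMap.range (a22 - a21 * a11⁻¹ * a12).mulVecLin) := by
  classical
  haveI := a11.invertibleOfIsUnitDet h
  set σ := a22 - a21 * a11⁻¹ * a12 with hσ
  set S := Matrix.fromBlocks a11 a12 a21 a22 with hSdef
  have hinv : ⅟a11 = a11⁻¹ := invOf_eq_nonsing_inv a11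
  have hLDU : S = fromBlocks 1 0 (a21 * a11⁻¹) 1 * fromBlocks a11 0 0 σ *
      fromBlocks 1 (a11⁻¹ * a12) 0 1 := by
    have := fromBlocks_eq_of_invertible₁₁ a11 a12 a21 a22
    rwa [hinv] at this
  have hdetU : IsUnit (fromBlocks (1 : Matrix int int ℝ) (a11⁻¹ * a12) 0
      (1 : Matrix ext ext ℝ)).det := by
    rw [det_fromBlocks_zero₂₁]; simp
  have hdetL : IsUnit (fromBlocks (1 : Matrix int int ℝ) 0 (a21 * a11⁻¹)
      (1 : Matrix ext ext ℝ)).det := by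
    rw [det_fromBlocks_zero₁₂]; simp
  have hrank : S.rank = (fromBlocks a11 0 0 σ).rank := by
    rw [hLDU, Matrix.rank_mul_eq_left_of_isUnit_det _ _ hdetU,
      Matrix.rank_mul_eq_right_of_isUnit_det _ _ hdetL]
  have hk1 := ker_blockdiag_finrank a11 σ h
  have rnS : S.rank + Module.finrank ℝ (LinearMap.ker S.mulVecLin) =
      Fintype.card (int ⊕ ext) := by
    rw [Matrix.rank, ← Module.finrank_fintype_fun_eq_card ℝ]
    exact LinearMap.finrank_range_add_finrank_ker _
  have rnD : (fromBlocks a11 0 0 σ).rank +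
      Module.finrank ℝ (LinearMap.ker (fromBlocks a11 0 0 σ).mulVecLin) =
      Fintype.card (int ⊕ ext) := by
    rw [Matrix.rank, ← Module.finrank_fintype_fun_eq_card ℝ]
    exact LinearMap.finrank_range_add_finrank_ker _
  have rnσ : σ.rank + Module.finrank ℝ (LinearMap.ker σ.mulVecLin) = Fintype.card ext := by
    rw [Matrix.rank, ← Module.finrank_fintype_fun_eq_card ℝ]
    exact LinearMap.finrank_range_add_finrank_ker _
  have qS : Module.finrank ℝ (((int ⊕ ext) → ℝ) ⧸ LinearMap.range S.mulVecLin) + S.rank =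
      Fintype.card (int ⊕ ext) := by
    rw [Matrix.rank, ← Module.finrank_fintype_fun_eq_card ℝ]
    exact Submodule.finrank_quotient_add_finrank _
  have qσ : Module.finrank ℝ ((ext → ℝ) ⧸ LinearMap.range σ.mulVecLin) + σ.rank =
      Fintype.card ext := by
    rw [Matrix.rank, ← Module.finrank_fintype_fun_eq_card ℝ]
    exact Submodule.finrank_quotient_add_finrank _
  rw [Fintype.card_sum] at rnS rnD qS
  constructor <;> omega
end
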